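/- Let h : {1, 2, 3, …} → ℚ satisfy h₁ = 1 and the recursion h_{n+1} = Σ_{l=1}^{n} ((2n−1)! · l² · (n+1−l)²) / ((2l−2)! · (2(n−l))! · (n+1)) · h_l · h_{n+1−l} for all n ≥ 1. Define the one-variable formal power series φ(z) = Σ_{n≥1} n·h_n·zⁿ/(2n−2)! ∈ ℚ[[z]]. Then φ satisfies the first-order ordinary differential equation z²·(φ′)² − 2z·φ′ + 2φ = 0 in ℚ[[z]]. -/

import Mathlib

open PowerSeries

/-- The one-variable series `φ(z) = Σ_{n≥1} n·h_n·zⁿ/(2n−2)!` in `ℚ[[z]]`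
(the `n = 0` term vanishes because of the factor `n`). -/
noncomputable def phiSeries (h : ℕ → ℚ) : PowerSeries ℚ :=
  PowerSeries.mk fun n => (n : ℚ) * h n / ((2 * n - 2).factorial : ℚ)

/-- **The ODE satisfied by the reduced `ℂP¹` potential.**
If `h₁ = 1` and `h` satisfies the recursion
`h_{n+1} = Σ_{l=1}^{n} ((2n−1)!·l²·(n+1−l)²)/((2l−2)!·(2(n−l))!·(n+1))·h_l·h_{n+1−l}`
for all `n ≥ 1`, then `φ(z) = Σ_{n≥1} n·h_n·zⁿ/(2n−2)!` satisfies the first-order ODE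
`z²·(φ′)² − 2z·φ′ + 2φ = 0` in `ℚ[[z]]`. -/
lemma psi_eq (h : ℕ → ℚ) :
    (X : PowerSeries ℚ) * derivativeFun (phiSeries h) =
      PowerSeries.mk (fun n => (n : ℚ) ^ 2 * h n / ((2 * n - 2).factorial : ℚ)) := by
  ext n
  cases n with
  | zero => simp
  | succ m =>
    rw [coeff_succ_X_mul, show derivativeFun (phiSeries h) = derivative ℚ (phiSeries h) from rfl, coeff_derivativeFun, phiSeries, coeff_mk, coeff_mk]
    push_cast
    ring

theorem phi_satisfies_ode (h : ℕ → ℚ) (h1 : h 1 = 1)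
    (hrec : ∀ n : ℕ, 1 ≤ n →
      h (n + 1) = ∑ l ∈ Finset.Icc 1 n,
        (((2 * n - 1).factorial : ℚ) * (l : ℚ) ^ 2 * ((n + 1 - l : ℕ) : ℚ) ^ 2) /
            (((2 * l - 2).factorial : ℚ) * ((2 * (n - l)).factorial : ℚ) * ((n : ℚ) + 1)) *
          h l * h (n + 1 - l)) :
    (X : PowerSeries ℚ) ^ 2 * (derivativeFun (phiSeries h)) ^ 2 -
        2 * X * derivativeFun (phiSeries h) + 2 * phiSeries h = 0 := by
  set c : ℕ → ℚ := fun n => (n : ℚ) ^ 2 * h n / ((2 * n - 2).factorial : ℚ) with hc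
  have key : (X : PowerSeries ℚ) ^ 2 * (derivativeFun (phiSeries h)) ^ 2 -
      2 * X * derivativeFun (phiSeries h) + 2 * phiSeries h
      = PowerSeries.mk c * PowerSeries.mk c -
          (PowerSeries.mk c + PowerSeries.mk c) + (phiSeries h + phiSeries h) := by
    rw [← psi_eq h]; ring
  rw [key]
  ext m
  rw [map_zero, map_add, map_sub, map_add, map_add, coeff_mul]
  simp only [coeff_mk, phiSeries]
  -- goal: Σ_{p∈antidiag m} c p.1 * c p.2 - (c m + c m) + (a m + a m) = 0
  rw [Finset.Nat.sum_antidiagonal_eq_sum_range_succ (fun i j => c i * c j)]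
  match m with
  | 0 => simp [hc]
  | 1 =>
    simp [Finset.sum_range_succ, hc, h1]
  | (n+2) =>
    set n' := n + 1 with hn'
    have hn1 : 1 ≤ n' := by omega
    -- reduce range sum to Icc 1 n'
    have hc0 : ∀ k, c k * c (n' + 1 - k) = 0 → True := fun _ _ => trivial
    have hsum : ∑ i ∈ Finset.range (n' + 1 + 1), c i * c (n' + 1 - i)
        = ∑ i ∈ Finset.Icc 1 n', c i * c (n' + 1 - i) := by
      symm
      apply Finset.sum_subset
      · intro i hi
        simp only [Finset.mem_Icc] at hi
        simp only [Finset.mem_range]; omega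
      · intro i hi hni
        simp only [Finset.mem_range] at hi
        simp only [Finset.mem_Icc, not_and, not_le] at hni
        have : i = 0 ∨ i = n' + 1 := by omega
        rcases this with rfl | rfl
        · simp [hc]
        · simp [hc]
    rw [hsum]
    have main : ∑ i ∈ Finset.Icc 1 n', c i * c (n' + 1 - i)
        = ((n' : ℚ) + 1) * h (n' + 1) / ((2 * n' - 1).factorial : ℚ) := by
      rw [hrec n' hn1, Finset.mul_sum, Finset.sum_div]
      refine Finset.sum_congr rfl ?_
      intro i hi
      simp only [Finset.mem_Icc] at hi
      have e1 : 2 * (n' + 1 - i) - 2 = 2 * (n' - i) := by omega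
      simp only [hc, e1]
      have A : ((2 * i - 2).factorial : ℚ) ≠ 0 := Nat.cast_ne_zero.mpr (Nat.factorial_ne_zero _)
      have B : ((2 * (n' - i)).factorial : ℚ) ≠ 0 := Nat.cast_ne_zero.mpr (Nat.factorial_ne_zero _)
      have C0 : ((2 * n' - 1).factorial : ℚ) ≠ 0 := Nat.cast_ne_zero.mpr (Nat.factorial_ne_zero _)
      have D : ((n' : ℚ) + 1) ≠ 0 := Nat.cast_add_one_ne_zero n'
      field_simp
    rw [main]
    have e2 : 2 * (n + 2) - 2 = 2 * n + 2 := by omega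
    have e3 : 2 * n' - 1 = 2 * n + 1 := by omega
    have e4 : ((2 * n + 2).factorial : ℚ) = (2 * (n:ℚ) + 2) * ((2 * n + 1).factorial : ℚ) := by
      rw [show 2 * n + 2 = (2 * n + 1) + 1 from rfl, Nat.factorial_succ]
      push_cast; ring
    have hnn : (n' : ℚ) + 1 = (n : ℚ) + 2 := by simp [hn']; ring
    simp only [hc, e2, e3, e4, hnn]
    have C0 : ((2 * n + 1).factorial : ℚ) ≠ 0 := Nat.cast_ne_zero.mpr (Nat.factorial_ne_zero _)
    have E : (2 * (n:ℚ) + 2) ≠ 0 := by positivity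
    push_cast
    field_simp
    ring
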